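/- Let α be a nonempty finite set and let p_b, p_g : α → ℝ be strictly positive functions. Then for every function D : α → (0,1), Σ_{x∈α} [ p_b(x)·log D(x) + p_g(x)·log(1 − D(x)) ] ≤ Σ_{x∈α} [ p_b(x)·log( p_b(x)/(p_b(x)+p_g(x)) ) + p_g(x)·log( p_g(x)/(p_b(x)+p_g(x)) ) ], with equality if and only if D(x) = p_b(x)/(p_b(x)+p_g(x)) for all x ∈ α. -/

import Mathlib

lemma bgan_pointwise (a b t : ℝ) (ha : 0 < a) (hb : 0 < b) (ht0 : 0 < t) (ht1 : t < 1) :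
    (a * Real.log t + b * Real.log (1 - t) ≤
      a * Real.log (a / (a + b)) + b * Real.log (b / (a + b))) ∧
    (a * Real.log t + b * Real.log (1 - t) =
      a * Real.log (a / (a + b)) + b * Real.log (b / (a + b)) ↔ t = a / (a + b)) := by
  have hab : 0 < a + b := by linarith
  have ht1' : 0 < 1 - t := by linarith
  set u := t * (a + b) / a with hu_def
  set v := (1 - t) * (a + b) / b with hv_def
  have hu : 0 < u := by positivity
  have hv : 0 < v := by positivity
  have key : a * Real.log t + b * Real.log (1 - t) -
      (a * Real.log (a / (a + b)) + b * Real.log (b / (a + b))) =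
      a * Real.log u + b * Real.log v := by
    rw [hu_def, hv_def, Real.log_div (by positivity) ha.ne', Real.log_div (by positivity) hb.ne',
      Real.log_div ha.ne' hab.ne', Real.log_div hb.ne' hab.ne',
      Real.log_mul ht0.ne' hab.ne', Real.log_mul ht1'.ne' hab.ne']
    ring
  have hsum : a * (u - 1) + b * (v - 1) = 0 := by
    rw [hu_def, hv_def]; field_simp; ring
  have h1 : a * Real.log u ≤ a * (u - 1) :=
    mul_le_mul_of_nonneg_left (Real.log_le_sub_one_of_pos hu) ha.le
  have h2 : b * Real.log v ≤ b * (v - 1) :=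
    mul_le_mul_of_nonneg_left (Real.log_le_sub_one_of_pos hv) hb.le
  refine ⟨by linarith, ?_, ?_⟩
  · intro heq
    by_contra hne
    have hu1 : u ≠ 1 := by
      intro h
      apply hne
      rw [hu_def, div_eq_one_iff_eq ha.ne'] at h
      rw [eq_div_iff hab.ne']; linarith
    have h1' : a * Real.log u < a * (u - 1) :=
      mul_lt_mul_of_pos_left (Real.log_lt_sub_one_of_pos hu hu1) ha
    linarith
  · intro h
    have hu1 : u = 1 := by rw [hu_def, h]; field_simp
    have hv1 : v = 1 := by
      rw [hv_def, h]; field_simp; ring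
    rw [hu1, hv1, Real.log_one] at key
    linarith

theorem bgan_optimal_discriminator_finite {α : Type*} [Fintype α] [Nonempty α]
    (pb pg : α → ℝ) (hpb : ∀ x, 0 < pb x) (hpg : ∀ x, 0 < pg x)
    (D : α → ℝ) (hD : ∀ x, D x ∈ Set.Ioo (0 : ℝ) 1) :
    (∑ x, (pb x * Real.log (D x) + pg x * Real.log (1 - D x))) ≤
      (∑ x, (pb x * Real.log (pb x / (pb x + pg x)) +
        pg x * Real.log (pg x / (pb x + pg x)))) ∧
    ((∑ x, (pb x * Real.log (D x) + pg x * Real.log (1 - D x))) =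
      (∑ x, (pb x * Real.log (pb x / (pb x + pg x)) +
        pg x * Real.log (pg x / (pb x + pg x)))) ↔
      ∀ x, D x = pb x / (pb x + pg x)) := by
  have hpt := fun x => bgan_pointwise (pb x) (pg x) (D x) (hpb x) (hpg x) (hD x).1 (hD x).2
  have hle : ∀ x ∈ Finset.univ, pb x * Real.log (D x) + pg x * Real.log (1 - D x) ≤
      pb x * Real.log (pb x / (pb x + pg x)) + pg x * Real.log (pg x / (pb x + pg x)) :=
    fun x _ => (hpt x).1
  refine ⟨Finset.sum_le_sum hle, ?_⟩
  rw [Finset.sum_eq_sum_iff_of_le hle]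
  constructor
  · intro h x
    exact (hpt x).2.mp (h x (Finset.mem_univ x))
  · intro h x _
    exact (hpt x).2.mpr (h x)
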